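/- arXiv:2401.06870 — 2 statements merged into one kernel-verified Lean document; each statement's English description precedes it below -/
import Mathlib

section
/- The intersection of two isolated objects of the groupoid GTSh is again an isolated object of GTSh. -/
def braidRel : Set (FreeGroup (Fin 2)) :=
  {FreeGroup.of 0 * FreeGroup.of 1 * FreeGroup.of 0 *
    (FreeGroup.of 1 * FreeGroup.of 0 * FreeGroup.of 1)⁻¹}

/-- The Artin braid group on 3 strands. -/
abbrev B3 := PresentedGroup braidRel

def σ₁ : B3 := PresentedGroup.of 0
def σ₂ : B3 := PresentedGroup.of 1

/-- The standard projection B₃ → S₃. -/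
def ρ : B3 →* Equiv.Perm (Fin 3) :=
  PresentedGroup.toGroup (f := ![Equiv.swap 0 1, Equiv.swap 1 2]) (by
    intro r hr
    simp only [braidRel, Set.mem_singleton_iff] at hr
    subst hr
    simp only [map_mul, map_inv, FreeGroup.lift_apply_of]
    decide)

/-- The pure braid group on 3 strands. -/
def PB3 : Subgroup B3 := ρ.ker

def c : B3 := (σ₁ * σ₂ * σ₁) ^ 2

abbrev F2 := FreeGroup (Fin 2)
def xx : F2 := FreeGroup.of 0
def yy : F2 := FreeGroup.of 1

/-- The identification of F₂ with ⟨σ₁², σ₂²⟩ ≤ PB₃. -/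
def ι : F2 →* B3 := FreeGroup.lift ![σ₁ ^ 2, σ₂ ^ 2]

/-- The pair (m, f) satisfies the two hexagon relations modulo N. -/
def Hex (N : Subgroup B3) [N.Normal] (m : ℤ) (f : F2) : Prop :=
  QuotientGroup.mk' N (σ₁ ^ (2 * m + 1) * (ι f)⁻¹ * σ₂ ^ (2 * m + 1) * ι f) =
      QuotientGroup.mk' N ((ι f)⁻¹ * σ₁ * σ₂ * (σ₁ ^ 2) ^ (-m) * c ^ m) ∧
  QuotientGroup.mk' N ((ι f)⁻¹ * σ₂ ^ (2 * m + 1) * ι f * σ₁ ^ (2 * m + 1)) =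
      QuotientGroup.mk' N (σ₂ * σ₁ * (σ₂ ^ 2) ^ (-m) * c ^ m * ι f)

/-- N_ord: the lcm of the orders of x₁₂N, x₂₃N and cN in B₃/N. -/
noncomputable def Nord (N : Subgroup B3) [N.Normal] : ℕ :=
  Nat.lcm
    (Nat.lcm (orderOf (QuotientGroup.mk' N (σ₁ ^ 2)))
      (orderOf (QuotientGroup.mk' N (σ₂ ^ 2))))
    (orderOf (QuotientGroup.mk' N c))

/-- The endomorphism E_{m,f} of F₂. -/
def Emap (m : ℤ) (f : F2) : F2 →* F2 :=
  FreeGroup.lift ![xx ^ (2 * m + 1), f⁻¹ * yy ^ (2 * m + 1) * f]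

/-- [m, f] is a GT-shadow with target N and kernel (source) K. -/
def IsShadow (K N : Subgroup B3) [N.Normal] (m : ℤ) (f : F2) : Prop :=
  Hex N m f ∧
  (∃ g ∈ commutator F2, g⁻¹ * f ∈ N.comap ι) ∧
  IsUnit ((2 * m + 1 : ℤ) : ZMod (Nord N)) ∧
  ∃ T : B3 →* B3 ⧸ N,
    T σ₁ = QuotientGroup.mk' N (σ₁ ^ (2 * m + 1)) ∧
    T σ₂ = QuotientGroup.mk' N ((ι f)⁻¹ * σ₂ ^ (2 * m + 1) * ι f) ∧
    Function.Surjective T ∧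
    T.ker = K

/-- [m, f] is a GT-shadow with target N (with unspecified source). -/
def IsShadowTgt (N : Subgroup B3) [N.Normal] (m : ℤ) (f : F2) : Prop :=
  ∃ K : Subgroup B3, IsShadow K N m f

/-- An object N of GTSh is isolated if every GT-shadow with target N has kernel N. -/
def IsIsolated (N : Subgroup B3) [N.Normal] : Prop :=
  ∀ (K : Subgroup B3) (m : ℤ) (f : F2), IsShadow K N m f → K = N

lemma nord_dvd_of_le (M N : Subgroup B3) [M.Normal] [N.Normal] (h : M ≤ N) :
    Nord N ∣ Nord M := by
  have key : ∀ x : B3, orderOf (QuotientGroup.mk' N x) ∣ orderOf (QuotientGroup.mk' M x) := by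
    intro x
    have hφ := orderOf_map_dvd
      (QuotientGroup.map M N (MonoidHom.id B3) (by simpa using h)) (QuotientGroup.mk' M x)
    simpa [QuotientGroup.map_mk'] using hφ
  unfold Nord
  refine Nat.lcm_dvd (Nat.lcm_dvd ?_ ?_) ?_
  · exact (key _).trans ((Nat.dvd_lcm_left _ _).trans (Nat.dvd_lcm_left _ _))
  · exact (key _).trans ((Nat.dvd_lcm_right _ _).trans (Nat.dvd_lcm_left _ _))
  · exact (key _).trans (Nat.dvd_lcm_right _ _)

lemma shadow_lift (M N : Subgroup B3) [M.Normal] [N.Normal] (h : M ≤ N)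
    (m : ℤ) (f : F2) (T : B3 →* B3 ⧸ M)
    (hHex : Hex M m f)
    (hcomm : ∃ g ∈ commutator F2, g⁻¹ * f ∈ M.comap ι)
    (hunit : IsUnit ((2 * m + 1 : ℤ) : ZMod (Nord M)))
    (hT1 : T σ₁ = QuotientGroup.mk' M (σ₁ ^ (2 * m + 1)))
    (hT2 : T σ₂ = QuotientGroup.mk' M ((ι f)⁻¹ * σ₂ ^ (2 * m + 1) * ι f))
    (hTsurj : Function.Surjective T) :
    IsShadow ((QuotientGroup.map M N (MonoidHom.id B3) (by simpa using h)).comp T).ker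
      N m f := by
  set φ := QuotientGroup.map M N (MonoidHom.id B3) (by simpa using h) with hφdef
  have hφmk : ∀ x : B3, φ (QuotientGroup.mk' M x) = QuotientGroup.mk' N x := by
    intro x; simp [hφdef, QuotientGroup.map_mk']
  refine ⟨?_, ?_, ?_, φ.comp T, ?_, ?_, ?_, rfl⟩
  · obtain ⟨h1, h2⟩ := hHex
    constructor
    · have := congrArg φ h1; rw [hφmk, hφmk] at this; exact this
    · have := congrArg φ h2; rw [hφmk, hφmk] at this; exact this
  · obtain ⟨g, hg, hgf⟩ := hcomm
    exact ⟨g, hg, Subgroup.comap_mono h hgf⟩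
  · have hdvd := nord_dvd_of_le M N h
    rw [show ((2 * m + 1 : ℤ) : ZMod (Nord N)) =
        (ZMod.castHom hdvd (ZMod (Nord N))) ((2 * m + 1 : ℤ) : ZMod (Nord M)) from
      (map_intCast _ _).symm]
    exact hunit.map _
  · rw [MonoidHom.comp_apply, hT1, hφmk]
  · rw [MonoidHom.comp_apply, hT2, hφmk]
  · have hφsurj : Function.Surjective φ := by
      intro q
      obtain ⟨x, hx⟩ := QuotientGroup.mk'_surjective N q
      exact ⟨QuotientGroup.mk' M x, by rw [hφmk, hx]⟩
    exact hφsurj.comp hTsurj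

/-- The intersection of two isolated objects of GTSh is again isolated. -/
theorem inf_isolated (N K : Subgroup B3) [N.Normal] [K.Normal]
    (hNfin : N.FiniteIndex) (hKfin : K.FiniteIndex)
    (hNle : N ≤ PB3) (hKle : K ≤ PB3)
    (hN : IsIsolated N) (hK : IsIsolated K) :
    IsIsolated (N ⊓ K) := by
  intro L m f hs
  obtain ⟨hHex, hcomm, hunit, T, hT1, hT2, hTsurj, hTker⟩ := hs
  have hleN : N ⊓ K ≤ N := inf_le_left
  have hleK : N ⊓ K ≤ K := inf_le_right
  set φN := QuotientGroup.map (N ⊓ K) N (MonoidHom.id B3) (by simpa using hleN) with hφN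
  set φK := QuotientGroup.map (N ⊓ K) K (MonoidHom.id B3) (by simpa using hleK) with hφK
  have hshN := shadow_lift (N ⊓ K) N hleN m f T hHex hcomm hunit hT1 hT2 hTsurj
  have hshK := shadow_lift (N ⊓ K) K hleK m f T hHex hcomm hunit hT1 hT2 hTsurj
  have hkerN : (φN.comp T).ker = N := hN _ m f hshN
  have hkerK : (φK.comp T).ker = K := hK _ m f hshK
  rw [← hTker]
  ext x
  constructor
  · intro hx
    have hx1 : T x = 1 := hx
    constructor
    · rw [← hkerN]
      show φN (T x) = 1
      rw [hx1, map_one]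
    · rw [← hkerK]
      show φK (T x) = 1
      rw [hx1, map_one]
  · intro hx
    have h1 : φN (T x) = 1 := by
      have hm : x ∈ (φN.comp T).ker := by rw [hkerN]; exact hx.1
      exact hm
    have h2 : φK (T x) = 1 := by
      have hm : x ∈ (φK.comp T).ker := by rw [hkerK]; exact hx.2
      exact hm
    obtain ⟨g, hg⟩ := QuotientGroup.mk'_surjective (N ⊓ K) (T x)
    rw [← hg] at h1 h2
    rw [hφN, QuotientGroup.map_mk'] at h1
    rw [hφK, QuotientGroup.map_mk'] at h2
    have hgN : g ∈ N := by
      simpa using (QuotientGroup.eq_one_iff (g : B3)).mp (by simpa using h1)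
    have hgK : g ∈ K := by
      simpa using (QuotientGroup.eq_one_iff (g : B3)).mp (by simpa using h2)
    show T x = 1
    rw [← hg]
    exact (QuotientGroup.eq_one_iff g).mpr ⟨hgN, hgK⟩
end

section
/- For any group G and any finite-index normal subgroup N of G, the kernel of the natural continuous homomorphism from the profinite completion Ĝ to G/N is topologically isomorphic to the profinite completion of N. -/
/-- The directed poset of finite-index normal subgroups of G. -/
def NFIs (G : Type*) [Group G] := {N : Subgroup G // N.Normal ∧ N.FiniteIndex}

instance (G : Type*) [Group G] (N : NFIs G) : (N.1).Normal := N.2.1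

instance (G : Type*) [Group G] (N : NFIs G) : TopologicalSpace (G ⧸ N.1) := ⊥

instance (G : Type*) [Group G] (N : NFIs G) : DiscreteTopology (G ⧸ N.1) := ⟨rfl⟩

/-- The transition map G/K → G/N for K ≤ N. -/
def transMap {G : Type*} [Group G] {K N : NFIs G} (h : K.1 ≤ N.1) :
    G ⧸ K.1 →* G ⧸ N.1 :=
  QuotientGroup.map K.1 N.1 (MonoidHom.id G) (fun _ hg => h hg)

/-- The profinite completion of G, realized as the inverse limit of the quotients
G/N over finite-index normal subgroups N, i.e. as the subgroup of the product
∏ G/N consisting of compatible families (with the subspace topology of the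
product topology). -/
def profCompletion (G : Type*) [Group G] : Subgroup (∀ N : NFIs G, G ⧸ N.1) where
  carrier := {x | ∀ (K N : NFIs G) (h : K.1 ≤ N.1), transMap h (x K) = x N}
  one_mem' := by
    intro K N h
    show transMap h 1 = 1
    exact map_one _
  mul_mem' := by
    intro a b ha hb K N h
    show transMap h (a K * b K) = a N * b N
    rw [map_mul, ha K N h, hb K N h]
  inv_mem' := by
    intro a ha K N h
    show transMap h (a K)⁻¹ = (a N)⁻¹
    rw [map_inv, ha K N h]

/-- The standard homomorphism j : G → Ĝ. -/
def jmap (G : Type*) [Group G] : G →* profCompletion G where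
  toFun g := ⟨fun N => QuotientGroup.mk g, by
    intro K N h
    show transMap h (QuotientGroup.mk g) = QuotientGroup.mk g
    simp [transMap]; rfl⟩
  map_one' := Subtype.ext (funext fun N => rfl)
  map_mul' g h := Subtype.ext (funext fun N => rfl)

/-- The natural continuous projection Ĝ → G/N. -/
def projN (G : Type*) [Group G] (N : NFIs G) : profCompletion G →* G ⧸ N.1 :=
  (Pi.evalMonoidHom _ N).comp (profCompletion G).subtype

section Aux
variable {G : Type*} [Group G] (N : Subgroup G) (hN : N.Normal) (hfin : N.FiniteIndex)


/-- restriction of K : NFIs G to a f.i. normal subgroup of N -/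
def resH (K : NFIs G) : NFIs N :=
  ⟨K.1.comap N.subtype, ⟨K.2.1.comap _, ⟨by
    intro h0
    refine K.2.2.index_ne_zero ?_
    have hd : K.1.relIndex N.subtype.range ∣ K.1.index :=
      Subgroup.relIndex_dvd_index_of_normal K.1 N.subtype.range
    rw [← Subgroup.index_comap] at hd
    rw [h0] at hd
    exact zero_dvd_iff.mp hd⟩⟩⟩

/-- normal core in G of a f.i. normal subgroup of N -/
def coreK (H : NFIs N) : NFIs G :=
  ⟨(H.1.map N.subtype).normalCore, Subgroup.normalCore_normal _, by
    haveI : (H.1.map N.subtype).FiniteIndex := ⟨by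
      rw [Subgroup.index_map_subtype]
      exact mul_ne_zero H.2.2.index_ne_zero hfin.index_ne_zero⟩
    exact Subgroup.finiteIndex_normalCore _⟩

lemma resH_coreK_le (H : NFIs N) : (resH N (coreK N hfin H)).1 ≤ H.1 := by
  intro n hn
  have : (n : G) ∈ H.1.map N.subtype := (H.1.map N.subtype).normalCore_le hn
  rcases this with ⟨m, hm, hmn⟩
  have : m = n := Subtype.ext hmn
  rwa [← this]

lemma coreK_le_self (H : NFIs N) : (coreK N hfin H).1 ≤ N := by
  intro g hg
  have : g ∈ H.1.map N.subtype := (H.1.map N.subtype).normalCore_le hg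
  rcases this with ⟨m, _, hmn⟩
  exact hmn ▸ m.2


end Aux

section Aux2
variable {G : Type*} [Group G] (N : Subgroup G) (hN : N.Normal) (hfin : N.FiniteIndex)

/-- the coordinatewise map N/(K∩N) → G/K -/
def iotaMap (K : NFIs G) : (↥N) ⧸ (resH N K).1 →* G ⧸ K.1 :=
  QuotientGroup.map _ _ N.subtype (fun _ hn => hn)

lemma psi_compat (y : profCompletion ↥N) {K K' : NFIs G} (h : K.1 ≤ K'.1) :
    transMap h (iotaMap N K (y.1 (resH N K))) = iotaMap N K' (y.1 (resH N K')) := by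
  have hc := y.2 (resH N K) (resH N K') (Subgroup.comap_mono h)
  rw [← hc]
  induction y.1 (resH N K) using QuotientGroup.induction_on with
  | H n => simp [iotaMap, transMap]; rfl

noncomputable def psi : profCompletion ↥N →* (projN G ⟨N, hN, hfin⟩).ker where
  toFun y := ⟨⟨fun K => iotaMap N K (y.1 (resH N K)), fun K K' h => psi_compat N y h⟩, by
    show iotaMap N ⟨N, hN, hfin⟩ (y.1 _) = 1
    induction y.1 (resH N ⟨N, hN, hfin⟩) using QuotientGroup.induction_on with
    | H n =>
      show QuotientGroup.mk (n : G) = 1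
      exact (QuotientGroup.eq_one_iff _).mpr n.2⟩
  map_one' := by
    apply Subtype.ext; apply Subtype.ext; funext K
    show iotaMap N K 1 = 1
    exact map_one _
  map_mul' a b := by
    apply Subtype.ext; apply Subtype.ext; funext K
    show iotaMap N K (a.1 _ * b.1 _) = iotaMap N K (a.1 _) * iotaMap N K (b.1 _)
    exact map_mul _ _ _



lemma psi_inj : Function.Injective (psi N hN hfin) := by
  rw [injective_iff_map_eq_one]
  intro y hy
  apply Subtype.ext; funext H
  have h1 : iotaMap N (coreK N hfin H) (y.1 (resH N (coreK N hfin H))) = 1 :=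
    congrArg (fun z => z.1.1 (coreK N hfin H)) hy
  have h2 : y.1 (resH N (coreK N hfin H)) = 1 := by
    revert h1
    induction y.1 (resH N (coreK N hfin H)) using QuotientGroup.induction_on with
    | H n =>
      intro h1
      have hn : (n : G) ∈ (coreK N hfin H).1 := by
        have : (QuotientGroup.mk (n : G) : G ⧸ (coreK N hfin H).1) = 1 := h1
        exact (QuotientGroup.eq_one_iff _).mp this
      exact (QuotientGroup.eq_one_iff _).mpr hn
  have hc := y.2 (resH N (coreK N hfin H)) H (resH_coreK_le N hfin H)
  show y.1 H = 1
  rw [← hc, h2, map_one]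

lemma coreK_resH_le (K : NFIs G) : (coreK N hfin (resH N K)).1 ≤ K.1 :=
  le_trans (Subgroup.normalCore_le _) (le_trans (Subgroup.map_comap_le _ _) le_rfl)

lemma psi_surj : Function.Surjective (psi N hN hfin) := by
  intro x
  have hch : ∀ H : NFIs ↥N, ∃ n : ↥N,
      (QuotientGroup.mk (n : G) : G ⧸ (coreK N hfin H).1) = x.1.1 (coreK N hfin H) := by
    intro H
    obtain ⟨g, hg⟩ := QuotientGroup.mk_surjective (x.1.1 (coreK N hfin H))
    have h0 : transMap (G := G) (K := coreK N hfin H) (N := ⟨N, hN, hfin⟩)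
        (coreK_le_self N hfin H) (x.1.1 (coreK N hfin H)) = 1 := by
      rw [x.1.2 (coreK N hfin H) ⟨N, hN, hfin⟩ (coreK_le_self N hfin H)]
      exact x.2
    rw [← hg] at h0
    have hgN : g ∈ N := (QuotientGroup.eq_one_iff _).mp h0
    exact ⟨⟨g, hgN⟩, hg⟩
  classical
  let nH : (H : NFIs ↥N) → ↥N := fun H => (hch H).choose
  have spec : ∀ H, (QuotientGroup.mk ((nH H : ↥N) : G) : G ⧸ (coreK N hfin H).1)
      = x.1.1 (coreK N hfin H) := fun H => (hch H).choose_spec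
  have key : ∀ (H H' : NFIs ↥N), H.1 ≤ H'.1 → (nH H)⁻¹ * nH H' ∈ H'.1 := by
    intro H H' h
    have hcore : (coreK N hfin H).1 ≤ (coreK N hfin H').1 :=
      Subgroup.normalCore_mono (Subgroup.map_mono h)
    have := x.1.2 (coreK N hfin H) (coreK N hfin H') hcore
    rw [← spec H, ← spec H'] at this
    have hmk : (QuotientGroup.mk ((nH H : ↥N) : G) : G ⧸ (coreK N hfin H').1)
        = QuotientGroup.mk ((nH H' : ↥N) : G) := this
    have hGmem : ((nH H : ↥N) : G)⁻¹ * ((nH H' : ↥N) : G) ∈ (coreK N hfin H').1 :=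
      QuotientGroup.eq.mp hmk
    have : (nH H)⁻¹ * nH H' ∈ (resH N (coreK N hfin H')).1 := hGmem
    exact resH_coreK_le N hfin H' this
  refine ⟨⟨fun H => QuotientGroup.mk (nH H), ?_⟩, ?_⟩
  · intro H H' h
    show transMap h (QuotientGroup.mk (nH H)) = QuotientGroup.mk (nH H')
    have : (QuotientGroup.mk (nH H) : ↥N ⧸ H'.1) = QuotientGroup.mk (nH H') :=
      QuotientGroup.eq.mpr (key H H' h)
    simpa [transMap]
  · apply Subtype.ext; apply Subtype.ext; funext K
    show iotaMap N K (QuotientGroup.mk (nH (resH N K))) = x.1.1 K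
    have h1 : iotaMap N K (QuotientGroup.mk (nH (resH N K)))
        = QuotientGroup.mk ((nH (resH N K) : ↥N) : G) := rfl
    rw [h1]
    have h2 := x.1.2 (coreK N hfin (resH N K)) K (coreK_resH_le N hfin K)
    rw [← spec (resH N K)] at h2
    rw [← h2]
    simp [transMap]; rfl


instance (G : Type*) [Group G] (H : NFIs G) : Finite (G ⧸ H.1) :=
  @Subgroup.finite_quotient_of_finiteIndex _ _ _ H.2.2

lemma profCompletion_isClosed (G : Type*) [Group G] :
    IsClosed ((profCompletion G : Set (∀ N : NFIs G, G ⧸ N.1))) := by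
  have h : (profCompletion G : Set (∀ N : NFIs G, G ⧸ N.1)) =
      ⋂ (K : NFIs G), ⋂ (N' : NFIs G), ⋂ (h : K.1 ≤ N'.1),
        {x : ∀ N : NFIs G, G ⧸ N.1 | transMap h (x K) = x N'} := by
    ext x
    simp only [SetLike.mem_coe, Set.mem_iInter, Set.mem_setOf_eq]
    rfl
  rw [h]
  exact isClosed_iInter fun K => isClosed_iInter fun N' => isClosed_iInter fun hle =>
    isClosed_eq ((continuous_of_discreteTopology).comp (continuous_apply K))
      (continuous_apply N')

lemma psi_cont : Continuous (psi N hN hfin) := by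
  apply Continuous.subtype_mk
  apply Continuous.subtype_mk
  apply continuous_pi
  intro K
  exact (continuous_of_discreteTopology).comp
    ((continuous_apply (resH N K)).comp continuous_subtype_val)


end Aux2

/-- For a finite-index normal subgroup N of G, the kernel of the natural
continuous homomorphism Ĝ → G/N is topologically isomorphic to the profinite
completion of N. -/
theorem ker_proj_iso_profCompletion (G : Type*) [Group G] (N : Subgroup G)
    (hN : N.Normal) (hfin : N.FiniteIndex) :
    ∃ e : (projN G ⟨N, hN, hfin⟩).ker ≃* profCompletion N,
      Continuous e ∧ Continuous e.symm := by
  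
  have hbij : Function.Bijective (psi N hN hfin) := ⟨psi_inj N hN hfin, psi_surj N hN hfin⟩
  haveI : CompactSpace (profCompletion ↥N) :=
    isCompact_iff_compactSpace.mp ((profCompletion_isClosed ↥N).isCompact)
  refine ⟨(MulEquiv.ofBijective _ hbij).symm, ?_, psi_cont N hN hfin⟩
  have hc : Continuous ⇑(MulEquiv.ofBijective (psi N hN hfin) hbij).toEquiv :=
    psi_cont N hN hfin
  have := Continuous.continuous_symm_of_equiv_compact_to_t2
    (f := (MulEquiv.ofBijective (psi N hN hfin) hbij).toEquiv) hc
  exact this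
end
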